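/- arXiv:2108.06303 — 2 statements merged into one kernel-verified Lean document; each statement's English description precedes it below -/
import Mathlib

section
/- Suppose a nonnegative measurable kernel φ on X × X and a measurable function g : X → [0,∞) satisfy ∫ φ(x,y) dλ(y) + ∫ φ(x,y) g(y) dλ(y) ≤ g(x) for λ-a.e. x. Define convolution powers φ^{*1} := φ and φ^{*(k+1)}(x,y) := ∫ φ(x,z) φ^{*k}(z,y) dλ(z). Then for every n ∈ ℕ, g(x) ≥ Σ_{k=1}^n ∫ φ^{*k}(x,y) dλ(y) + ∫ φ^{*n}(x,y) g(y) dλ(y) for λ-a.e. x. -/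
open MeasureTheory
open scoped ENNReal NNReal

/-- The convolution powers of a kernel: `convPow μ φ k = φ^{*(k+1)}`, i.e.
`convPow μ φ 0 = φ^{*1} = φ` and `φ^{*(k+1)}(x,y) = ∫ φ(x,z) φ^{*k}(z,y) dμ(z)`. -/
noncomputable def convPow {X : Type*} [MeasurableSpace X] (μ : Measure X)
    (φ : X → X → ℝ≥0∞) : ℕ → X → X → ℝ≥0∞
  | 0 => φ
  | (k + 1) => fun x y => ∫⁻ z, φ x z * convPow μ φ k z y ∂μ

lemma convPow_meas {X : Type*} [MeasurableSpace X] (lam : Measure X) [SigmaFinite lam]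
    (φ : X → X → ℝ≥0∞) (hφm : Measurable (Function.uncurry φ)) :
    ∀ k, Measurable (Function.uncurry (convPow lam φ k))
  | 0 => hφm
  | (k + 1) => by
    have ih := convPow_meas lam φ hφm k
    have : Measurable (fun q : (X × X) × X => φ q.1.1 q.2 * convPow lam φ k q.2 q.1.2) := by
      exact (hφm.comp (measurable_fst.fst.prodMk measurable_snd)).mul
        (ih.comp (measurable_snd.prodMk measurable_fst.snd))
    exact Measurable.lintegral_prod_right' this

lemma swap1 {X : Type*} [MeasurableSpace X] (lam : Measure X) [SigmaFinite lam]
    (φ : X → X → ℝ≥0∞) (hφm : Measurable (Function.uncurry φ)) (k : ℕ) (x : X) :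
    ∫⁻ y, convPow lam φ (k + 1) x y ∂lam
      = ∫⁻ z, φ x z * ∫⁻ y, convPow lam φ k z y ∂lam ∂lam := by
  have hk := convPow_meas lam φ hφm k
  have hmeas : AEMeasurable (Function.uncurry fun y z => φ x z * convPow lam φ k z y)
      (lam.prod lam) := by
    apply Measurable.aemeasurable
    exact ((hφm.comp (measurable_const.prodMk measurable_snd)).mul
      (hk.comp (measurable_snd.prodMk measurable_fst)))
  calc ∫⁻ y, convPow lam φ (k + 1) x y ∂lam
      = ∫⁻ y, ∫⁻ z, φ x z * convPow lam φ k z y ∂lam ∂lam := rfl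
    _ = ∫⁻ z, ∫⁻ y, φ x z * convPow lam φ k z y ∂lam ∂lam :=
        lintegral_lintegral_swap hmeas
    _ = ∫⁻ z, φ x z * ∫⁻ y, convPow lam φ k z y ∂lam ∂lam := by
        refine lintegral_congr fun z => ?_
        exact lintegral_const_mul _ (hk.comp (measurable_const.prodMk measurable_id))

lemma swap2 {X : Type*} [MeasurableSpace X] (lam : Measure X) [SigmaFinite lam]
    (φ : X → X → ℝ≥0∞) (hφm : Measurable (Function.uncurry φ))
    (g : X → ℝ≥0) (hgm : Measurable g) (k : ℕ) (x : X) :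
    ∫⁻ y, convPow lam φ (k + 1) x y * (g y : ℝ≥0∞) ∂lam
      = ∫⁻ z, φ x z * ∫⁻ y, convPow lam φ k z y * (g y : ℝ≥0∞) ∂lam ∂lam := by
  have hk := convPow_meas lam φ hφm k
  have hmeas : AEMeasurable (Function.uncurry fun y z => φ x z * (convPow lam φ k z y * (g y : ℝ≥0∞)))
      (lam.prod lam) := by
    apply Measurable.aemeasurable
    exact (hφm.comp (measurable_const.prodMk measurable_snd)).mul
      ((hk.comp (measurable_snd.prodMk measurable_fst)).mul
        ((measurable_coe_nnreal_ennreal.comp hgm).comp measurable_fst))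
  calc ∫⁻ y, convPow lam φ (k + 1) x y * (g y : ℝ≥0∞) ∂lam
      = ∫⁻ y, ∫⁻ z, φ x z * (convPow lam φ k z y * (g y : ℝ≥0∞)) ∂lam ∂lam := by
        refine lintegral_congr fun y => ?_
        show (∫⁻ z, φ x z * convPow lam φ k z y ∂lam) * (g y : ℝ≥0∞) = _
        rw [← lintegral_mul_const' _ _ (by simp)]
        simp [mul_assoc]
    _ = ∫⁻ z, ∫⁻ y, φ x z * (convPow lam φ k z y * (g y : ℝ≥0∞)) ∂lam ∂lam :=
        lintegral_lintegral_swap hmeas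
    _ = ∫⁻ z, φ x z * ∫⁻ y, convPow lam φ k z y * (g y : ℝ≥0∞) ∂lam ∂lam := by
        refine lintegral_congr fun z => ?_
        exact lintegral_const_mul _
          ((hk.comp (measurable_const.prodMk measurable_id)).mul (measurable_coe_nnreal_ennreal.comp hgm))

/-- if `∫ φ(x,y) dλ(y) + ∫ φ(x,y) g(y) dλ(y) ≤ g(x)` λ-a.e., then for every
`n ≥ 1` (here `n+1`), `g(x) ≥ Σ_{k=1}^{n+1} ∫ φ^{*k}(x,y) dλ(y) + ∫ φ^{*(n+1)}(x,y) g(y) dλ(y)`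
for λ-a.e. `x`. -/
theorem stmt2 {X : Type*} [MeasurableSpace X] (lam : Measure X) [SigmaFinite lam]
    (φ : X → X → ℝ≥0∞) (hφm : Measurable (Function.uncurry φ))
    (hφ1 : ∀ x y, φ x y ≤ 1) (hsym : ∀ x y, φ x y = φ y x)
    (g : X → ℝ≥0) (hgm : Measurable g)
    (h : ∀ᵐ x ∂lam,
      (∫⁻ y, φ x y ∂lam) + (∫⁻ y, φ x y * (g y : ℝ≥0∞) ∂lam) ≤ (g x : ℝ≥0∞)) :
    ∀ n : ℕ, ∀ᵐ x ∂lam,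
      (∑ k ∈ Finset.range (n + 1), ∫⁻ y, convPow lam φ k x y ∂lam) +
        (∫⁻ y, convPow lam φ n x y * (g y : ℝ≥0∞) ∂lam) ≤ (g x : ℝ≥0∞) := by
  intro n
  induction n with
  | zero => simpa [convPow] using h
  | succ n ih =>
    filter_upwards [h] with x hx
    have key : (∫⁻ z, φ x z *
        ((∑ k ∈ Finset.range (n + 1), ∫⁻ y, convPow lam φ k z y ∂lam) +
          ∫⁻ y, convPow lam φ n z y * (g y : ℝ≥0∞) ∂lam) ∂lam)
        ≤ ∫⁻ z, φ x z * (g z : ℝ≥0∞) ∂lam :=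
      lintegral_mono_ae (ih.mono fun z hz => mul_le_mul_right hz _)
    have hexp : (∫⁻ z, φ x z *
        ((∑ k ∈ Finset.range (n + 1), ∫⁻ y, convPow lam φ k z y ∂lam) +
          ∫⁻ y, convPow lam φ n z y * (g y : ℝ≥0∞) ∂lam) ∂lam)
        = (∑ k ∈ Finset.range (n + 1), ∫⁻ y, convPow lam φ (k + 1) x y ∂lam) +
          ∫⁻ y, convPow lam φ (n + 1) x y * (g y : ℝ≥0∞) ∂lam := by
      have hφx : Measurable fun z => φ x z := hφm.comp (measurable_const.prodMk measurable_id)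
      have hSk : ∀ k, Measurable fun z => ∫⁻ y, convPow lam φ k z y ∂lam := fun k =>
        (convPow_meas lam φ hφm k).lintegral_prod_right'
      have hT : Measurable fun z => ∫⁻ y, convPow lam φ n z y * (g y : ℝ≥0∞) ∂lam :=
        ((convPow_meas lam φ hφm n).mul ((measurable_coe_nnreal_ennreal.comp hgm).comp measurable_snd)).lintegral_prod_right'
      simp only [mul_add, Finset.mul_sum]
      rw [lintegral_add_right _ (show Measurable fun z => φ x z * ∫⁻ y, convPow lam φ n z y * (g y : ℝ≥0∞) ∂lam from hφx.mul hT),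
        lintegral_finset_sum _ (fun k _ => show Measurable fun z => φ x z * ∫⁻ y, convPow lam φ k z y ∂lam from hφx.mul (hSk k))]
      refine congrArg₂ (· + ·) ?_ (swap2 lam φ hφm g hgm n x).symm
      exact Finset.sum_congr rfl fun k _ => (swap1 lam φ hφm k x).symm
    have step : (∑ k ∈ Finset.range (n + 2), ∫⁻ y, convPow lam φ k x y ∂lam) +
        (∫⁻ y, convPow lam φ (n + 1) x y * (g y : ℝ≥0∞) ∂lam)
        = (∫⁻ y, φ x y ∂lam) +
          ((∑ k ∈ Finset.range (n + 1), ∫⁻ y, convPow lam φ (k + 1) x y ∂lam) +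
            ∫⁻ y, convPow lam φ (n + 1) x y * (g y : ℝ≥0∞) ∂lam) := by
      rw [Finset.sum_range_succ']
      show _ + (∫⁻ y, convPow lam φ 0 x y ∂lam) + _ = _
      simp [convPow]
      ring
    rw [step, ← hexp]
    exact le_trans (add_le_add_right key _) hx
end

section
/- If τ ≤ Σ_{k=1}^n φ^{*k} + φ^{*n} * τ pointwise for all n, τ ≤ 1, and Σ_{k=1}^∞ ∫_X φ^{*k}(x,y) dλ(y) ≤ g(x) with ∫_X φ^{*n}(x,z) dλ(z) → 0, then ∫_X τ(x,y) dλ(y) ≤ g(x), for λ-a.e. x, where the integral over X is obtained as a monotone limit of integrals over an increasing exhaustion B_1 ⊂ B_2 ⊂ ⋯ of finite-measure sets. -/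
open MeasureTheory Filter
open scoped ENNReal NNReal Topology

lemma convPow_measurable {X : Type*} [MeasurableSpace X] (μ : Measure X) [SigmaFinite μ]
    (φ : X → X → ℝ≥0∞) (hφm : Measurable (Function.uncurry φ)) :
    ∀ k, Measurable (Function.uncurry (convPow μ φ k)) := by
  intro k
  induction k with
  | zero => exact hφm
  | succ k ih =>
    have : Measurable (Function.uncurry (convPow μ φ (k+1))) := by
      have h : Measurable (fun p : (X × X) × X =>
          φ p.1.1 p.2 * convPow μ φ k p.2 p.1.2) := by
        apply Measurable.mul
        · exact hφm.comp (measurable_fst.fst.prodMk measurable_snd)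
        · exact ih.comp (measurable_snd.prodMk measurable_fst.snd)
      exact h.lintegral_prod_right'
    exact this

/-- if `τ ≤ Σ_{k=1}^n φ^{*k} + φ^{*n} * τ` pointwise for all `n ≥ 1`, `τ ≤ 1`,
`Σ_{k=1}^∞ ∫ φ^{*k}(x,y) dλ(y) ≤ g(x)` and `∫ φ^{*n}(x,z) dλ(z) → 0` λ-a.e., then
`∫_X τ(x,y) dλ(y) ≤ g(x)` λ-a.e., where `∫_X` arises as a monotone limit of the
integrals over an increasing exhaustion `B_ℓ ↑ X` of finite-measure sets. -/
theorem stmt5 {X : Type*} [MeasurableSpace X] (lam : Measure X) [SigmaFinite lam]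
    (B : ℕ → Set X) (hBmeas : ∀ ℓ, MeasurableSet (B ℓ)) (hBmono : Monotone B)
    (hBunion : (⋃ ℓ, B ℓ) = Set.univ) (hBfin : ∀ ℓ, lam (B ℓ) < ∞)
    (τ φ : X → X → ℝ≥0∞)
    (hτm : Measurable (Function.uncurry τ)) (hφm : Measurable (Function.uncurry φ))
    (hτ1 : ∀ x y, τ x y ≤ 1) (hφ1 : ∀ x y, φ x y ≤ 1)
    (hiter : ∀ n : ℕ, ∀ x y,
      τ x y ≤ (∑ k ∈ Finset.range (n + 1), convPow lam φ k x y) +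
        ∫⁻ z, convPow lam φ n x z * τ z y ∂lam)
    (g : X → ℝ≥0)
    (hsum : ∀ᵐ x ∂lam, (∑' k : ℕ, ∫⁻ y, convPow lam φ k x y ∂lam) ≤ (g x : ℝ≥0∞))
    (htail : ∀ᵐ x ∂lam,
      Tendsto (fun n => ∫⁻ z, convPow lam φ n x z ∂lam) atTop (𝓝 0)) :
    ∀ᵐ x ∂lam, (∫⁻ y, τ x y ∂lam) ≤ (g x : ℝ≥0∞) := by
  filter_upwards [hsum, htail] with x hsx htx
  -- Step 1: the full integral is the sup of integrals over the exhaustion.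
  have hτmx : Measurable (τ x) := hτm.comp (measurable_prodMk_left)
  have hrepr : (∫⁻ y, τ x y ∂lam) = ⨆ ℓ, ∫⁻ y in B ℓ, τ x y ∂lam := by
    have h1 : (fun y => τ x y) = fun y => ⨆ ℓ, (B ℓ).indicator (τ x) y := by
      funext y
      have hy : y ∈ ⋃ ℓ, B ℓ := hBunion ▸ Set.mem_univ y
      obtain ⟨ℓ₀, hℓ₀⟩ := Set.mem_iUnion.mp hy
      apply le_antisymm
      · exact le_iSup_of_le ℓ₀ (by simp [Set.indicator_of_mem hℓ₀])
      · exact iSup_le fun ℓ => Set.indicator_le_self _ _ y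
    conv_lhs => rw [h1]
    rw [lintegral_iSup]
    · exact iSup_congr fun ℓ => lintegral_indicator (hBmeas ℓ) _
    · exact fun ℓ => hτmx.indicator (hBmeas ℓ)
    · intro i j hij y
      exact Set.indicator_le_indicator_of_subset (hBmono hij) (fun _ => zero_le) y
  rw [hrepr]
  refine iSup_le fun ℓ => ?_
  -- Step 2: bound `∫_{B ℓ} τ x` using the iterated inequality at level `n`.
  have key : ∀ n : ℕ, (∫⁻ y in B ℓ, τ x y ∂lam) ≤
      (g x : ℝ≥0∞) + lam (B ℓ) * ∫⁻ z, convPow lam φ n x z ∂lam := by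
    intro n
    have hcm : ∀ k, Measurable (convPow lam φ k x) := fun k =>
      (convPow_measurable lam φ hφm k).comp (measurable_prodMk_left)
    calc (∫⁻ y in B ℓ, τ x y ∂lam)
        ≤ ∫⁻ y in B ℓ, ((∑ k ∈ Finset.range (n + 1), convPow lam φ k x y) +
            ∫⁻ z, convPow lam φ n x z * τ z y ∂lam) ∂lam :=
          lintegral_mono fun y => hiter n x y
      _ ≤ (∫⁻ y in B ℓ, ∑ k ∈ Finset.range (n + 1), convPow lam φ k x y ∂lam) +
            ∫⁻ y in B ℓ, (∫⁻ z, convPow lam φ n x z * τ z y ∂lam) ∂lam := by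
          rw [lintegral_add_left (Finset.measurable_sum _ fun k _ => hcm k)]
      _ ≤ (g x : ℝ≥0∞) + lam (B ℓ) * ∫⁻ z, convPow lam φ n x z ∂lam := by
          gcongr
          · calc (∫⁻ y in B ℓ, ∑ k ∈ Finset.range (n + 1), convPow lam φ k x y ∂lam)
                ≤ ∫⁻ y, ∑ k ∈ Finset.range (n + 1), convPow lam φ k x y ∂lam :=
                  lintegral_mono' Measure.restrict_le_self le_rfl
              _ = ∑ k ∈ Finset.range (n + 1), ∫⁻ y, convPow lam φ k x y ∂lam :=
                  lintegral_finset_sum _ fun k _ => hcm k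
              _ ≤ ∑' k, ∫⁻ y, convPow lam φ k x y ∂lam := ENNReal.sum_le_tsum _
              _ ≤ (g x : ℝ≥0∞) := hsx
          · calc (∫⁻ y in B ℓ, (∫⁻ z, convPow lam φ n x z * τ z y ∂lam) ∂lam)
                ≤ ∫⁻ _ in B ℓ, (∫⁻ z, convPow lam φ n x z ∂lam) ∂lam := by
                  refine lintegral_mono fun y => lintegral_mono fun z => ?_
                  calc convPow lam φ n x z * τ z y
                      ≤ convPow lam φ n x z * 1 := by gcongr; exact hτ1 z y
                    _ = convPow lam φ n x z := mul_one _
              _ = lam (B ℓ) * ∫⁻ z, convPow lam φ n x z ∂lam := by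
                  rw [setLIntegral_const, mul_comm]
  -- Step 3: let n → ∞.
  have hlim : Tendsto (fun n => (g x : ℝ≥0∞) +
      lam (B ℓ) * ∫⁻ z, convPow lam φ n x z ∂lam) atTop (𝓝 ((g x : ℝ≥0∞) + 0)) := by
    refine Tendsto.const_add _ ?_
    have := ENNReal.Tendsto.const_mul (b := (0 : ℝ≥0∞)) (a := lam (B ℓ)) htx
      (Or.inr (hBfin ℓ).ne)
    simpa using this
  have := ge_of_tendsto' hlim key
  simpa using this
end
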